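/- Let M be a compact metric space, f a homeomorphism, h : M_f(M) → [0,∞) affine bounded upper semicontinuous with P(φ) = sup{h(μ)+∫φdμ}, and suppose: the set of tangent functionals t_φ = {μ_φ} is a singleton and P(φ) - sup{h(μ)+∫φdμ : μ ergodic, μ ≠ μ_φ} = a > 0. Then for every ψ with ‖φ - ψ‖ < a/2, μ_φ is the unique equilibrium state for ψ, and P(χ) = h(μ_φ) + ∫χ dμ_φ for all χ in the ball of radius a/2 around φ; in particular P is affine on that ball. -/
import Mathlib


open MeasureTheory Filter Topology

lemma stmt_19_integrable {M : Type*} [MetricSpace M] [CompactSpace M] [MeasurableSpace M]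
    [BorelSpace M] (ν : ProbabilityMeasure M) (χ : C(M, ℝ)) :
    Integrable (fun y => χ y) (ν : Measure M) :=
  (BoundedContinuousFunction.mkOfCompact χ).integrable _

lemma stmt_19_abs {M : Type*} [MetricSpace M] [CompactSpace M] [MeasurableSpace M]
    [BorelSpace M] (ν : ProbabilityMeasure M) (χ : C(M, ℝ)) :
    |∫ y, χ y ∂(ν : Measure M)| ≤ ‖χ‖ := by
  have := (BoundedContinuousFunction.mkOfCompact χ).norm_integral_le_norm (ν : Measure M)
  simpa [BoundedContinuousFunction.norm_mkOfCompact, Real.norm_eq_abs] using this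

/-- integral is sub-Lipschitz: `∫χ₁ ≤ ∫χ₂ + ‖χ₁ - χ₂‖`. -/
lemma stmt_19_lip {M : Type*} [MetricSpace M] [CompactSpace M] [MeasurableSpace M]
    [BorelSpace M] (ν : ProbabilityMeasure M) (χ₁ χ₂ : C(M, ℝ)) :
    ∫ y, χ₁ y ∂(ν : Measure M) ≤ ∫ y, χ₂ y ∂(ν : Measure M) + ‖χ₁ - χ₂‖ := by
  have hsub : ∫ y, χ₁ y ∂(ν : Measure M) - ∫ y, χ₂ y ∂(ν : Measure M)
      = ∫ y, (χ₁ - χ₂) y ∂(ν : Measure M) := by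
    simp only [ContinuousMap.sub_apply]
    rw [integral_sub (stmt_19_integrable ν χ₁) (stmt_19_integrable ν χ₂)]
  have := (abs_le.mp (stmt_19_abs ν (χ₁ - χ₂))).2
  linarith [hsub ▸ this]

/-- additivity of the integral over continuous maps. -/
lemma stmt_19_add {M : Type*} [MetricSpace M] [CompactSpace M] [MeasurableSpace M]
    [BorelSpace M] (ν : ProbabilityMeasure M) (χ₁ χ₂ : C(M, ℝ)) :
    ∫ y, (χ₁ + χ₂) y ∂(ν : Measure M)
      = ∫ y, χ₁ y ∂(ν : Measure M) + ∫ y, χ₂ y ∂(ν : Measure M) := by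
  simp only [ContinuousMap.add_apply]
  rw [integral_add (stmt_19_integrable ν χ₁) (stmt_19_integrable ν χ₂)]

/-- Two probability measures with the same integrals on continuous maps coincide. -/
lemma stmt_19_ext {M : Type*} [MetricSpace M] [CompactSpace M] [MeasurableSpace M]
    [BorelSpace M] (ν μ : ProbabilityMeasure M)
    (hint : ∀ χ : C(M, ℝ), ∫ y, χ y ∂(ν : Measure M) = ∫ y, χ y ∂(μ : Measure M)) :
    ν = μ := by
  apply ProbabilityMeasure.toMeasure_injective
  apply ext_of_forall_lintegral_eq_of_IsFiniteMeasure
  intro f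
  have h1 := BoundedContinuousFunction.toReal_lintegral_coe_eq_integral f (ν : Measure M)
  have h2 := BoundedContinuousFunction.toReal_lintegral_coe_eq_integral f (μ : Measure M)
  have hχ := hint ⟨fun x => (f x : ℝ), NNReal.continuous_coe.comp f.continuous⟩
  simp only [ContinuousMap.coe_mk] at hχ
  have fin1 := (BoundedContinuousFunction.lintegral_lt_top_of_nnreal (ν : Measure M) f).ne
  have fin2 := (BoundedContinuousFunction.lintegral_lt_top_of_nnreal (μ : Measure M) f).ne
  rw [← ENNReal.toReal_eq_toReal_iff' fin1 fin2, h1, h2]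
  exact hχ

/-- Implication (3) ⇒ (5) of Theorem G in abstract form: if the tangent functionals to
`P` at `φ` form the singleton `{γ_φ}`, with `γ_φ` given by integration against the
invariant measure `μ_φ`, and
`a := P(φ) - sup{ h(μ) + ∫φ dμ : μ ergodic invariant, μ ≠ μ_φ } > 0`,
then for every `ψ` with `‖φ - ψ‖ < a/2`, `μ_φ` is the unique equilibrium state for `ψ`
and `P(ψ) = h(μ_φ) + ∫ψ dμ_φ`; in particular `P` is affine on that ball. -/
theorem stmt_19 {M : Type*} [MetricSpace M] [CompactSpace M]
    [MeasurableSpace M] [BorelSpace M]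
    (f : M ≃ₜ M)
    (Minv : Set (ProbabilityMeasure M))
    (hMinv : Minv = {ν : ProbabilityMeasure M |
      Measure.map f ν.toMeasure = ν.toMeasure})
    (h : ProbabilityMeasure M → ℝ)
    (hpos : ∀ ν ∈ Minv, 0 ≤ h ν)
    (hbdd : ∃ C : ℝ, ∀ ν ∈ Minv, h ν ≤ C)
    (haff : ∀ ν₁ ∈ Minv, ∀ ν₂ ∈ Minv, ∀ ρ ∈ Minv, ∀ a b : ℝ, 0 ≤ a → 0 ≤ b →
      a + b = 1 →
      ρ.toMeasure = ENNReal.ofReal a • ν₁.toMeasure + ENNReal.ofReal b • ν₂.toMeasure →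
      h ρ = a * h ν₁ + b * h ν₂)
    (husc : UpperSemicontinuousOn h Minv)
    (P : C(M, ℝ) → ℝ)
    (hP : ∀ χ : C(M, ℝ),
      IsLUB {x : ℝ | ∃ ν ∈ Minv, x = h ν + ∫ y, χ y ∂(ν : Measure M)} (P χ))
    (hPerg : ∀ χ : C(M, ℝ),
      IsLUB {x : ℝ | ∃ ν ∈ Minv, Ergodic f ν.toMeasure ∧
        x = h ν + ∫ y, χ y ∂(ν : Measure M)} (P χ))
    (φ : C(M, ℝ)) (μφ : ProbabilityMeasure M) (hμφ : μφ ∈ Minv)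
    (γφ : C(M, ℝ) →L[ℝ] ℝ)
    (hγφ : ∀ ψ : C(M, ℝ), γφ ψ = ∫ y, ψ y ∂(μφ : Measure M))
    (hT : {γ : C(M, ℝ) →L[ℝ] ℝ | ∀ ψ : C(M, ℝ), γ ψ ≤ P (φ + ψ) - P φ} = {γφ})
    (a : ℝ) (ha : 0 < a)
    (hgap : P φ - sSup {x : ℝ | ∃ ν ∈ Minv, Ergodic f ν.toMeasure ∧ ν ≠ μφ ∧
      x = h ν + ∫ y, φ y ∂(ν : Measure M)} = a) :
    ∀ ψ : C(M, ℝ), ‖φ - ψ‖ < a / 2 →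
      ({ν ∈ Minv | h ν + ∫ y, ψ y ∂(ν : Measure M) = P ψ} = {μφ}) ∧
      P ψ = h μφ + ∫ y, ψ y ∂(μφ : Measure M) := by
  -- `P` is 1-Lipschitz
  have hLip : ∀ χ₁ χ₂ : C(M, ℝ), P χ₁ ≤ P χ₂ + ‖χ₁ - χ₂‖ := by
    intro χ₁ χ₂
    refine (hP χ₁).2 ?_
    rintro x ⟨ν, hν, rfl⟩
    have h1 : h ν + ∫ y, χ₂ y ∂(ν : Measure M) ≤ P χ₂ := (hP χ₂).1 ⟨ν, hν, rfl⟩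
    have h2 := stmt_19_lip ν χ₁ χ₂
    linarith
  -- the gap estimate: all ergodic measures other than `μφ` are `a`-deficient at `φ`
  have hother : ∀ ν ∈ Minv, Ergodic f ν.toMeasure → ν ≠ μφ →
      h ν + ∫ y, φ y ∂(ν : Measure M) ≤ P φ - a := by
    intro ν hν herg hne
    have hbdd' : BddAbove {x : ℝ | ∃ ν ∈ Minv, Ergodic f ν.toMeasure ∧ ν ≠ μφ ∧
        x = h ν + ∫ y, φ y ∂(ν : Measure M)} := by
      refine ⟨P φ, ?_⟩
      rintro x ⟨ν', hν', herg', _, rfl⟩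
      exact (hPerg φ).1 ⟨ν', hν', herg', rfl⟩
    have hmem := le_csSup hbdd' (show _ ∈ _ from ⟨ν, hν, herg, hne, rfl⟩)
    linarith
  -- the key step: `P χ = h μφ + ∫ χ dμφ` on the ball of radius `a/2`
  have hkey : ∀ χ : C(M, ℝ), ‖φ - χ‖ < a / 2 →
      P χ = h μφ + ∫ y, χ y ∂(μφ : Measure M) := by
    intro χ hχ
    have hle : h μφ + ∫ y, χ y ∂(μφ : Measure M) ≤ P χ := (hP χ).1 ⟨μφ, hμφ, rfl⟩
    by_contra hne
    have hlt : h μφ + ∫ y, χ y ∂(μφ : Measure M) < P χ := lt_of_le_of_ne hle (fun e => hne e.symm)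
    have hPφχ : P φ ≤ P χ + ‖φ - χ‖ := hLip φ χ
    have hub : (max (P φ - a / 2) (h μφ + ∫ y, χ y ∂(μφ : Measure M))) ∈
        upperBounds {x : ℝ | ∃ ν ∈ Minv, Ergodic f ν.toMeasure ∧
          x = h ν + ∫ y, χ y ∂(ν : Measure M)} := by
      rintro x ⟨ν, hν, herg, rfl⟩
      by_cases hcase : ν = μφ
      · subst hcase
        exact le_max_right _ _
      · refine le_trans ?_ (le_max_left _ _)
        have h1 := hother ν hν herg hcase
        have h2 := stmt_19_lip ν χ φ
        have h3 : ‖χ - φ‖ = ‖φ - χ‖ := norm_sub_rev χ φ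
        linarith
    have := (hPerg χ).2 hub
    have hmax : max (P φ - a / 2) (h μφ + ∫ y, χ y ∂(μφ : Measure M)) < P χ :=
      max_lt (by linarith) hlt
    linarith
  intro ψ hψ
  have h2 : P ψ = h μφ + ∫ y, ψ y ∂(μφ : Measure M) := hkey ψ hψ
  refine ⟨?_, h2⟩
  ext ν
  simp only [Set.mem_setOf_eq, Set.mem_singleton_iff]
  constructor
  · rintro ⟨hν, heq⟩
    set r : ℝ := a / 2 - ‖φ - ψ‖ with hr
    have hr0 : 0 < r := by simp only [hr]; linarith
    -- integrals against `ν` are dominated by integrals against `μφ` for small functions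
    have small : ∀ η : C(M, ℝ), ‖η‖ < r →
        ∫ y, η y ∂(ν : Measure M) ≤ ∫ y, η y ∂(μφ : Measure M) := by
      intro η hη
      have hball : ‖φ - (ψ + η)‖ < a / 2 := by
        have : φ - (ψ + η) = (φ - ψ) - η := by ring
        rw [this]
        calc ‖(φ - ψ) - η‖ ≤ ‖φ - ψ‖ + ‖η‖ := norm_sub_le _ _
          _ < a / 2 := by simp only [hr] at hη; linarith
      have e1 : P (ψ + η) = h μφ + ∫ y, (ψ + η) y ∂(μφ : Measure M) := hkey _ hball
      have e2 : h ν + ∫ y, (ψ + η) y ∂(ν : Measure M) ≤ P (ψ + η) := (hP _).1 ⟨ν, hν, rfl⟩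
      rw [stmt_19_add] at e1 e2
      linarith
    have hle : ∀ η : C(M, ℝ), ∫ y, η y ∂(ν : Measure M) ≤ ∫ y, η y ∂(μφ : Measure M) := by
      intro η
      set t : ℝ := r / (2 * (‖η‖ + 1)) with htdef
      have hnn : (0:ℝ) ≤ ‖η‖ := norm_nonneg η
      have ht0 : 0 < t := by
        apply div_pos hr0; positivity
      have hnorm : ‖t • η‖ < r := by
        rw [norm_smul t η, Real.norm_eq_abs, abs_of_pos ht0]
        rw [htdef, div_mul_eq_mul_div, div_lt_iff₀ (by positivity)]
        nlinarith
      have hs := small (t • η) hnorm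
      have hsmul : ∀ ρ : ProbabilityMeasure M,
          ∫ y, (t • η) y ∂(ρ : Measure M) = t * ∫ y, η y ∂(ρ : Measure M) := by
        intro ρ
        simp only [ContinuousMap.smul_apply, smul_eq_mul]
        rw [integral_const_mul]
      rw [hsmul ν, hsmul μφ] at hs
      exact le_of_mul_le_mul_left hs ht0
    have heqint : ∀ η : C(M, ℝ),
        ∫ y, η y ∂(ν : Measure M) = ∫ y, η y ∂(μφ : Measure M) := by
      intro η
      refine le_antisymm (hle η) ?_
      have := hle (-η)
      simp only [ContinuousMap.neg_apply] at this
      rw [integral_neg, integral_neg] at this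
      linarith
    exact stmt_19_ext ν μφ heqint
  · rintro rfl
    exact ⟨hμφ, h2.symm⟩
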